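/- arXiv:1003.1616 — 5 statements merged into one kernel-verified Lean document; each statement's English description precedes it below -/
import Mathlib

section
/- Let X be a Hilbert space, E(u) = ½⟨Lu,u⟩ + K(u) with L the duality (Riesz) operator so that ⟨Lu,u⟩ = ‖u‖², and C(u) = ⟨L₀u,u⟩ + K₀(u), where K and K₀ are of higher than quadratic order at 0: K(εv)/ε² → 0 and K₀(εv)/ε² → 0 uniformly for ‖v‖_Q ≤ 1 as ε → 0. Then e₀ := lim_{ε→0} inf{ E_Q(u)/|C_Q(u)| : ‖u‖_Q ≤ ε, |C_Q(u)| > 0 } equals inf_{u ≠ 0} (½⟨Lu,u⟩_Q)/|⟨L₀u,u⟩_Q|. -/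
private lemma ereal_le_coe_of_forall {a : EReal} {r : ℝ}
    (h : ∀ η : ℝ, 0 < η → a ≤ ((r + η : ℝ) : EReal)) : a ≤ (r : EReal) := by
  by_contra hra
  push_neg at hra
  obtain ⟨y, hry, hya⟩ := EReal.exists_between_coe_real hra
  have hyr : r < y := EReal.coe_lt_coe_iff.1 hry
  have := h (y - r) (by linarith)
  rw [show r + (y - r) = y by ring] at this
  exact absurd hya (not_lt.2 this)

private lemma ereal_le_of_forall_coe_lt {x y : EReal}
    (h : ∀ c : ℝ, (c : EReal) < x → (c : EReal) ≤ y) : x ≤ y := by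
  by_contra hxy
  push_neg at hxy
  obtain ⟨c, hyc, hcx⟩ := EReal.exists_between_coe_real hxy
  exact absurd (h c hcx) (not_le.2 hyc)

set_option maxHeartbeats 2000000 in
/-- Proposition `laida`: with `E_Q(u) = ½⟨Lu,u⟩_Q + K_Q(u)` and
`C_Q(u) = ⟨L₀u,u⟩_Q + K_{0,Q}(u)`, where the quadratic parts `QL u = ⟨Lu,u⟩_Q = ‖u‖_Q²`
and `QL0 u = ⟨L₀u,u⟩_Q` are 2-homogeneous, `QL ≥ 0`, and the remainders `K`, `K₀` are of
higher than quadratic order at `0`, uniformly on `‖v‖_Q ≤ 1`, one has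
`e₀ := lim_{ε→0} inf { E_Q(u)/|C_Q(u)| : ‖u‖_Q ≤ ε, |C_Q(u)| > 0 }
     = inf_{u ≠ 0} (½⟨Lu,u⟩_Q)/|⟨L₀u,u⟩_Q|`. -/
theorem stmt4 {X : Type*} [NormedAddCommGroup X] [NormedSpace ℝ X]
    (QL QL0 K K0 : X → ℝ)
    (hQLnn : ∀ u, 0 ≤ QL u)
    (hQLhom : ∀ (c : ℝ) (u : X), QL (c • u) = c ^ 2 * QL u)
    (hQL0hom : ∀ (c : ℝ) (u : X), QL0 (c • u) = c ^ 2 * QL0 u)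
    (hsmall : ∀ δ : ℝ, 0 < δ → ∃ ε₀ : ℝ, 0 < ε₀ ∧ ∀ (ε : ℝ) (v : X),
      0 < ε → ε ≤ ε₀ → QL v ≤ 1 →
        |K (ε • v)| ≤ δ * ε ^ 2 ∧ |K0 (ε • v)| ≤ δ * ε ^ 2) :
    (⨆ (ε : ℝ) (_ : 0 < ε),
        sInf {r : EReal | ∃ u : X, QL u ≤ ε ^ 2 ∧
          0 < |QL0 u + K0 u| ∧
          r = (((QL u / 2 + K u) / |QL0 u + K0 u| : ℝ) : EReal)})
      = sInf {r : EReal | ∃ u : X, QL0 u ≠ 0 ∧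
          r = ((QL u / 2 / |QL0 u| : ℝ) : EReal)} := by
  -- Key reformulation of the smallness hypothesis
  have key : ∀ δ : ℝ, 0 < δ → ∃ ε₀ : ℝ, 0 < ε₀ ∧ ∀ u : X, 0 < QL u → QL u ≤ ε₀ ^ 2 →
      |K u| ≤ δ * QL u ∧ |K0 u| ≤ δ * QL u := by
    intro δ hδ
    obtain ⟨ε₀, hε₀, h⟩ := hsmall δ hδ
    refine ⟨ε₀, hε₀, fun u hu hle => ?_⟩
    set s := Real.sqrt (QL u) with hs
    have hs0 : 0 < s := Real.sqrt_pos.2 hu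
    have hs2 : s ^ 2 = QL u := Real.sq_sqrt hu.le
    have hsle : s ≤ ε₀ := by
      have := Real.sqrt_le_sqrt hle
      rwa [Real.sqrt_sq hε₀.le] at this
    have hv : QL (s⁻¹ • u) ≤ 1 := by
      rw [hQLhom, inv_pow, ← hs2]
      rw [inv_mul_cancel₀ (by positivity)]
    have huv : s • s⁻¹ • u = u := by
      rw [smul_smul, mul_inv_cancel₀ hs0.ne', one_smul]
    have := h s (s⁻¹ • u) hs0 hsle hv
    rw [huv, hs2] at this
    exact this
  -- If `QL u = 0` then the remainders vanish at `u`.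
  have kzero : ∀ u : X, QL u = 0 → K u = 0 ∧ K0 u = 0 := by
    intro u hu
    obtain ⟨ε₀, hε₀, h⟩ := hsmall 1 one_pos
    have hb : ∀ η : ℝ, 0 < η → |K u| ≤ η ∧ |K0 u| ≤ η := by
      intro η hη
      set ε := min ε₀ (Real.sqrt η) with hε
      have hεpos : 0 < ε := lt_min hε₀ (Real.sqrt_pos.2 hη)
      have hv : QL (ε⁻¹ • u) ≤ 1 := by rw [hQLhom, hu]; norm_num
      have huv : ε • ε⁻¹ • u = u := by
        rw [smul_smul, mul_inv_cancel₀ hεpos.ne', one_smul]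
      have h2 := h ε (ε⁻¹ • u) hεpos (min_le_left _ _) hv
      rw [huv, one_mul] at h2
      have hε2 : ε ^ 2 ≤ η := by
        have h1 : ε ≤ Real.sqrt η := min_le_right _ _
        calc ε ^ 2 ≤ Real.sqrt η ^ 2 := by
              exact pow_le_pow_left₀ hεpos.le h1 2
          _ = η := Real.sq_sqrt hη.le
      exact ⟨h2.1.trans hε2, h2.2.trans hε2⟩
    constructor
    · refine abs_eq_zero.1 (le_antisymm ?_ (abs_nonneg _))
      exact le_of_forall_pos_le_add fun η hη => by simpa using (hb η hη).1
    · refine abs_eq_zero.1 (le_antisymm ?_ (abs_nonneg _))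
      exact le_of_forall_pos_le_add fun η hη => by simpa using (hb η hη).2
  apply le_antisymm
  · -- LHS ≤ RHS
    refine iSup_le fun ε => iSup_le fun hε => le_sInf fun r hr => ?_
    obtain ⟨u, hP, rfl⟩ := hr
    by_cases hQ : QL u = 0
    · -- test function ε • u gives ratio 0 = RHS value
      have hmem : QL (ε • u) = 0 := by rw [hQLhom, hQ, mul_zero]
      obtain ⟨hKz, hK0z⟩ := kzero (ε • u) hmem
      have hden : 0 < |QL0 (ε • u) + K0 (ε • u)| := by
        rw [hQL0hom, hK0z, add_zero, abs_mul]
        exact mul_pos (by rw [abs_pos]; positivity) (abs_pos.2 hP)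
      have : (((QL (ε • u) / 2 + K (ε • u)) / |QL0 (ε • u) + K0 (ε • u)| : ℝ) : EReal)
          ∈ {r : EReal | ∃ u : X, QL u ≤ ε ^ 2 ∧ 0 < |QL0 u + K0 u| ∧
            r = (((QL u / 2 + K u) / |QL0 u + K0 u| : ℝ) : EReal)} :=
        ⟨ε • u, by rw [hmem]; positivity, hden, rfl⟩
      refine le_trans (sInf_le this) ?_
      rw [hmem, hKz, hQ]
      norm_num
    · have hQpos : 0 < QL u := lt_of_le_of_ne (hQLnn u) (Ne.symm hQ)
      have hPpos : 0 < |QL0 u| := abs_pos.2 hP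
      set r0 : ℝ := QL u / 2 / |QL0 u| with hr0def
      have hr0 : 0 ≤ r0 := by positivity
      have hr0P : r0 * |QL0 u| = QL u / 2 := div_mul_cancel₀ _ hPpos.ne'
      refine ereal_le_coe_of_forall fun η hη => ?_
      set δ : ℝ := η * |QL0 u| / (QL u * (1 + r0 + η)) with hδdef
      have hδpos : 0 < δ := by positivity
      have hδeq : δ * (QL u * (1 + r0 + η)) = η * |QL0 u| :=
        div_mul_cancel₀ _ (by positivity)
      have hδQ : δ * QL u < |QL0 u| := by nlinarith [hδpos, hQpos, hPpos, hη, hr0]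
      obtain ⟨ε₀, hε₀, hKey⟩ := key δ hδpos
      set t : ℝ := min ε ε₀ / Real.sqrt (QL u) with ht
      have htpos : 0 < t := by
        apply div_pos (lt_min hε hε₀) (Real.sqrt_pos.2 hQpos)
      have htQ : t ^ 2 * QL u = (min ε ε₀) ^ 2 := by
        rw [ht, div_pow, Real.sq_sqrt hQpos.le,
          div_mul_cancel₀ _ hQpos.ne']
      have hQ' : QL (t • u) = t ^ 2 * QL u := hQLhom t u
      have hQ'pos : 0 < QL (t • u) := by rw [hQ']; positivity
      have hQ'ε : QL (t • u) ≤ ε ^ 2 := by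
        rw [hQ', htQ]
        exact pow_le_pow_left₀ (le_min hε.le hε₀.le) (min_le_left _ _) 2
      have hQ'ε₀ : QL (t • u) ≤ ε₀ ^ 2 := by
        rw [hQ', htQ]
        exact pow_le_pow_left₀ (le_min hε.le hε₀.le) (min_le_right _ _) 2
      obtain ⟨hKb, hK0b⟩ := hKey (t • u) hQ'pos hQ'ε₀
      rw [hQ'] at hKb hK0b
      have hP' : QL0 (t • u) = t ^ 2 * QL0 u := hQL0hom t u
      have ht2 : 0 < t ^ 2 := by positivity
      -- lower bound for the denominator
      have hdenlb : t ^ 2 * |QL0 u| - δ * (t ^ 2 * QL u) ≤ |QL0 (t • u) + K0 (t • u)| := by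
        rw [hP']
        have h1 : |(t ^ 2 * QL0 u : ℝ)| - |K0 (t • u)| ≤ |t ^ 2 * QL0 u + K0 (t • u)| := by
          have := abs_sub_abs_le_abs_sub (t ^ 2 * QL0 u) (-(K0 (t • u)))
          simpa [sub_neg_eq_add] using this
        have h2 : |(t ^ 2 * QL0 u : ℝ)| = t ^ 2 * |QL0 u| := by
          rw [abs_mul, abs_of_pos ht2]
        nlinarith [hK0b, h1]
      have hdenpos : 0 < |QL0 (t • u) + K0 (t • u)| := by
        refine lt_of_lt_of_le ?_ hdenlb
        nlinarith [hδQ, ht2]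
      have hmem : (((QL (t • u) / 2 + K (t • u)) / |QL0 (t • u) + K0 (t • u)| : ℝ) : EReal)
          ∈ {r : EReal | ∃ u : X, QL u ≤ ε ^ 2 ∧ 0 < |QL0 u + K0 u| ∧
            r = (((QL u / 2 + K u) / |QL0 u + K0 u| : ℝ) : EReal)} :=
        ⟨t • u, hQ'ε, hdenpos, rfl⟩
      refine le_trans (sInf_le hmem) ?_
      rw [EReal.coe_le_coe_iff]
      rw [div_le_iff₀ hdenpos]
      have hnum : QL (t • u) / 2 + K (t • u) ≤ t ^ 2 * QL u / 2 + δ * (t ^ 2 * QL u) := by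
        rw [hQ']
        nlinarith [hKb, abs_nonneg (K (t • u)), le_abs_self (K (t • u))]
      have hstep : t ^ 2 * QL u / 2 + δ * (t ^ 2 * QL u)
          = (r0 + η) * (t ^ 2 * |QL0 u| - δ * (t ^ 2 * QL u)) := by
        linear_combination (t ^ 2) * hδeq - (t ^ 2) * hr0P
      calc QL (t • u) / 2 + K (t • u)
          ≤ (r0 + η) * (t ^ 2 * |QL0 u| - δ * (t ^ 2 * QL u)) := hnum.trans hstep.le
        _ ≤ (r0 + η) * |QL0 (t • u) + K0 (t • u)| := by
            apply mul_le_mul_of_nonneg_left hdenlb (by positivity)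
  · -- RHS ≤ LHS
    refine ereal_le_of_forall_coe_lt fun c hc => ?_
    rcases le_or_gt c 0 with hc0 | hc0
    · -- trivial: the inf over small balls is eventually nonnegative
      obtain ⟨ε₀, hε₀, hKey⟩ := key (1/4) (by norm_num)
      have h0 : (0 : EReal) ≤ sInf {r : EReal | ∃ u : X, QL u ≤ ε₀ ^ 2 ∧
          0 < |QL0 u + K0 u| ∧
          r = (((QL u / 2 + K u) / |QL0 u + K0 u| : ℝ) : EReal)} := by
        refine le_sInf fun r hr => ?_
        obtain ⟨u, hu1, hu2, rfl⟩ := hr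
        have hnum : 0 ≤ QL u / 2 + K u := by
          by_cases hQ : QL u = 0
          · rw [hQ, (kzero u hQ).1]; norm_num
          · have hQpos : 0 < QL u := lt_of_le_of_ne (hQLnn u) (Ne.symm hQ)
            have := (hKey u hQpos hu1).1
            nlinarith [neg_abs_le (K u)]
        have : (0:ℝ) ≤ (QL u / 2 + K u) / |QL0 u + K0 u| :=
          div_nonneg hnum (abs_nonneg _)
        exact_mod_cast this
      calc (c : EReal) ≤ (0 : EReal) := by exact_mod_cast hc0
        _ ≤ _ := h0.trans (le_iSup₂ (f := fun (ε : ℝ) (_ : 0 < ε) =>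
            sInf {r : EReal | ∃ u : X, QL u ≤ ε ^ 2 ∧ 0 < |QL0 u + K0 u| ∧
              r = (((QL u / 2 + K u) / |QL0 u + K0 u| : ℝ) : EReal)}) ε₀ hε₀)
    · obtain ⟨a, hca, haS⟩ := EReal.exists_between_coe_real hc
      have hca' : c < a := EReal.coe_lt_coe_iff.1 hca
      have ha0 : 0 < a := hc0.trans hca'
      have hbound : ∀ u : X, a * |QL0 u| ≤ QL u / 2 := by
        intro u
        by_cases h : QL0 u = 0
        · rw [h, abs_zero, mul_zero]; linarith [hQLnn u]
        · have hmem : ((QL u / 2 / |QL0 u| : ℝ) : EReal)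
              ∈ {r : EReal | ∃ u : X, QL0 u ≠ 0 ∧
                r = ((QL u / 2 / |QL0 u| : ℝ) : EReal)} := ⟨u, h, rfl⟩
          have := haS.le.trans (sInf_le hmem)
          rw [EReal.coe_le_coe_iff] at this
          rwa [le_div_iff₀ (abs_pos.2 h)] at this
      set δ : ℝ := (a - c) / (2 * a * (1 + c)) with hδdef
      have hδpos : 0 < δ := by
        apply div_pos (by linarith) (by positivity)
      have hδeq : δ * (2 * a * (1 + c)) = a - c :=
        div_mul_cancel₀ _ (by positivity)
      obtain ⟨ε₀, hε₀, hKey⟩ := key δ hδpos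
      have hlb : (c : EReal) ≤ sInf {r : EReal | ∃ u : X, QL u ≤ ε₀ ^ 2 ∧
          0 < |QL0 u + K0 u| ∧
          r = (((QL u / 2 + K u) / |QL0 u + K0 u| : ℝ) : EReal)} := by
        refine le_sInf fun r hr => ?_
        obtain ⟨u, hu1, hu2, rfl⟩ := hr
        have hQpos : 0 < QL u := by
          rcases eq_or_lt_of_le (hQLnn u) with h | h
          · exfalso
            obtain ⟨hKz, hK0z⟩ := kzero u h.symm
            rw [hK0z, add_zero] at hu2
            have hP : QL0 u ≠ 0 := fun hz => by simp [hz] at hu2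
            have hb := hbound u
            rw [← h] at hb
            nlinarith [abs_pos.2 hP, ha0]
          · exact h
        obtain ⟨hKb, hK0b⟩ := hKey u hQpos hu1
        have hPub : |QL0 u| ≤ QL u / 2 / a := by
          rw [le_div_iff₀ ha0, mul_comm]
          exact hbound u
        have hden : |QL0 u + K0 u| ≤ |QL0 u| + δ * QL u :=
          (abs_add_le _ _).trans (by linarith)
        rw [EReal.coe_le_coe_iff, le_div_iff₀ hu2]
        have hnum : QL u / 2 - δ * QL u ≤ QL u / 2 + K u := by
          nlinarith [neg_abs_le (K u)]
        have hmain : c * (|QL0 u| + δ * QL u) ≤ QL u / 2 - δ * QL u := by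
          have h1 : a * (c * |QL0 u|) ≤ c * (a * |QL0 u|) := by ring_nf; linarith [le_refl (0:ℝ)]
          nlinarith [hbound u, hδeq, hQpos, ha0, hc0, abs_nonneg (QL0 u), hca']
        calc c * |QL0 u + K0 u| ≤ c * (|QL0 u| + δ * QL u) :=
              mul_le_mul_of_nonneg_left hden hc0.le
          _ ≤ QL u / 2 - δ * QL u := hmain
          _ ≤ QL u / 2 + K u := hnum
      exact hlb.trans (le_iSup₂ (f := fun (ε : ℝ) (_ : 0 < ε) =>
        sInf {r : EReal | ∃ u : X, QL u ≤ ε ^ 2 ∧ 0 < |QL0 u + K0 u| ∧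
          r = (((QL u / 2 + K u) / |QL0 u + K0 u| : ℝ) : EReal)}) ε₀ hε₀)
end

section
/- (Splitting property.) Let X be a Hilbert space and K : X → ℝ a C¹ functional defined via local densities K_Ω. Assume: (local compactness) if uₙ ⇀ ū weakly in X then K_Ω(uₙ) → K_Ω(ū) for every bounded Ω ⊂ ℝ^N; (boundedness) if ‖u‖ ≤ M then K′_Ω(u) is bounded in X′(Ω) uniformly in Ω; and for each u ∈ X and ε > 0 there is R with |K_{B_R^c}(u)| < ε and ‖u‖_{B_R^c} < ε. Then for every u ∈ X and every sequence wₙ ⇀ 0 weakly in X, K(u + wₙ) − K(u) − K(wₙ) → 0. -/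
open Filter

/-- splitting property, Lemma `sp` for the superquadratic part `K`.
`X` is a Hilbert space; `K` is defined through local densities: `KO Ω u` is the part of
`K u` coming from `Ω ⊆ ℝ^N` (`K = KO univ`, and `KO` splits along `Ω`, `Ωᶜ`), with
`KO Ω 0 = 0`. Assume local compactness (weak convergence improves `KO Ω` to convergence
on bounded `Ω`), that `KO Ω` is `C¹` with derivative bounded in `X′(Ω)` (i.e. by the
localized norm `normO Ω`) uniformly on bounded sets of `X` and in `Ω`, and smallness of
the tails `|K_{B_R^c}(u)|`, `‖u‖_{B_R^c}`. Then for `wₙ ⇀ 0` weakly,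
`K(u + wₙ) − K(u) − K(wₙ) → 0`. -/
theorem stmt6 {X : Type*} [NormedAddCommGroup X] [InnerProductSpace ℝ X]
    [CompleteSpace X] (N : ℕ)
    (K : X → ℝ)
    (KO : Set (EuclideanSpace ℝ (Fin N)) → X → ℝ)
    (normO : Set (EuclideanSpace ℝ (Fin N)) → X → ℝ)
    (D : Set (EuclideanSpace ℝ (Fin N)) → X → X →L[ℝ] ℝ)
    (hKuniv : ∀ u, K u = KO Set.univ u)
    (hKsplit : ∀ (Ω : Set (EuclideanSpace ℝ (Fin N))) (u : X),
      KO Set.univ u = KO Ω u + KO Ωᶜ u)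
    (hK0 : ∀ Ω, KO Ω 0 = 0)
    (hlc : ∀ (v : ℕ → X) (vbar : X),
      (∀ z : X, Tendsto (fun n => (inner ℝ z (v n - vbar) : ℝ)) atTop (nhds 0)) →
      ∀ Ω : Set (EuclideanSpace ℝ (Fin N)), Bornology.IsBounded Ω →
        Tendsto (fun n => KO Ω (v n)) atTop (nhds (KO Ω vbar)))
    (hderiv : ∀ Ω u, HasFDerivAt (KO Ω) (D Ω u) u)
    (hbound : ∀ M : ℝ, 0 < M → ∃ M' : ℝ, 0 < M' ∧ ∀ Ω (u h : X),
      ‖u‖ ≤ M → |D Ω u h| ≤ M' * normO Ω h)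
    (htail : ∀ (u : X) (ε : ℝ), 0 < ε → ∃ R : ℝ, 0 < R ∧
      |KO (Metric.ball (0 : EuclideanSpace ℝ (Fin N)) R)ᶜ u| < ε ∧
      normO (Metric.ball (0 : EuclideanSpace ℝ (Fin N)) R)ᶜ u < ε)
    (hnormnn : ∀ Ω u, 0 ≤ normO Ω u)
    (u : X) (w : ℕ → X)
    (hw : ∀ v : X, Tendsto (fun n => (inner ℝ v (w n) : ℝ)) atTop (nhds 0)) :
    Tendsto (fun n => K (u + w n) - K u - K (w n)) atTop (nhds 0) := by
  classical
  -- Boundedness of the weakly convergent sequence `w` via Banach–Steinhaus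
  obtain ⟨C, hC⟩ : ∃ C, ∀ n, ‖w n‖ ≤ C := by
    obtain ⟨C, hC⟩ := banach_steinhaus (g := fun n => innerSL ℝ (w n)) (fun v => by
      have h1 : Tendsto (fun n => ‖(innerSL ℝ (w n)) v‖) atTop (nhds ‖(0:ℝ)‖) := by
        simpa [real_inner_comm] using (hw v).norm
      obtain ⟨c, hc⟩ := h1.bddAbove_range
      exact ⟨c, fun n => hc (Set.mem_range_self n)⟩)
    exact ⟨C, fun n => by simpa [innerSL_apply_norm] using hC n⟩
  have hC0 : 0 ≤ C := le_trans (norm_nonneg _) (hC 0)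
  set M : ℝ := ‖u‖ + C + 1 with hMdef
  have hMpos : 0 < M := by positivity
  obtain ⟨M', hM'pos, hM'⟩ := hbound M hMpos
  rw [NormedAddCommGroup.tendsto_nhds_zero]
  intro ε hε
  set δ : ℝ := ε / (2 * (M' + 1)) with hδdef
  have hδpos : 0 < δ := by positivity
  obtain ⟨R, hRpos, hKtail, hntail⟩ := htail u δ hδpos
  set Ω : Set (EuclideanSpace ℝ (Fin N)) := Metric.ball (0 : EuclideanSpace ℝ (Fin N)) R with hΩdef
  -- convergence of the bounded part
  have h1 : Tendsto (fun n => KO Ω (u + w n)) atTop (nhds (KO Ω u)) :=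
    hlc (fun n => u + w n) u (fun z => by simpa using hw z) Ω Metric.isBounded_ball
  have h2 : Tendsto (fun n => KO Ω (w n)) atTop (nhds 0) := by
    have := hlc w 0 (fun z => by simpa using hw z) Ω Metric.isBounded_ball
    simpa [hK0] using this
  have h3 : Tendsto (fun n => KO Ω (u + w n) - KO Ω u - KO Ω (w n)) atTop (nhds 0) := by
    simpa using (h1.sub (tendsto_const_nhds (x := KO Ω u))).sub h2
  have h4 := (NormedAddCommGroup.tendsto_nhds_zero.mp h3) (ε / 2) (by positivity)
  filter_upwards [h4] with n hn
  -- tail estimate via the mean value inequality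
  have hmvt : |KO Ωᶜ (u + w n) - KO Ωᶜ (w n)| ≤ M' * normO Ωᶜ u := by
    have key : ∀ t ∈ Set.Icc (0:ℝ) 1,
        HasDerivWithinAt (fun t : ℝ => KO Ωᶜ (w n + t • u))
          (D Ωᶜ (w n + t • u) u) (Set.Icc (0:ℝ) 1) t := by
      intro t ht
      have hg : HasDerivAt (fun t : ℝ => w n + t • u) u t := by
        simpa using ((hasDerivAt_id t).smul_const u).const_add (w n)
      have := (hderiv Ωᶜ (w n + t • u)).comp_hasDerivAt t hg
      exact this.hasDerivWithinAt
    have bound : ∀ t ∈ Set.Ico (0:ℝ) 1,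
        ‖D Ωᶜ (w n + t • u) u‖ ≤ M' * normO Ωᶜ u := by
      intro t ht
      rw [Real.norm_eq_abs]
      apply hM'
      have : ‖w n + t • u‖ ≤ ‖w n‖ + |t| * ‖u‖ := by
        calc ‖w n + t • u‖ ≤ ‖w n‖ + ‖t • u‖ := norm_add_le _ _
        _ = ‖w n‖ + |t| * ‖u‖ := by rw [norm_smul, Real.norm_eq_abs]
      have ht1 : |t| ≤ 1 := by rw [abs_of_nonneg ht.1]; exact le_of_lt ht.2
      have : ‖w n + t • u‖ ≤ C + ‖u‖ := by
        nlinarith [hC n, norm_nonneg u]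
      linarith
    have := norm_image_sub_le_of_norm_deriv_le_segment_01' key bound
    simpa [add_comm] using this
  have habs : |KO Ωᶜ (u + w n) - KO Ωᶜ u - KO Ωᶜ (w n)| < ε / 2 := by
    have h5 : |KO Ωᶜ (u + w n) - KO Ωᶜ u - KO Ωᶜ (w n)|
        ≤ |KO Ωᶜ (u + w n) - KO Ωᶜ (w n)| + |KO Ωᶜ u| := by
      have : KO Ωᶜ (u + w n) - KO Ωᶜ u - KO Ωᶜ (w n)
          = (KO Ωᶜ (u + w n) - KO Ωᶜ (w n)) + (-(KO Ωᶜ u)) := by ring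
      rw [this]
      calc |(KO Ωᶜ (u + w n) - KO Ωᶜ (w n)) + (-(KO Ωᶜ u))|
          ≤ |KO Ωᶜ (u + w n) - KO Ωᶜ (w n)| + |(-(KO Ωᶜ u))| := abs_add_le _ _
        _ = _ := by rw [abs_neg]
      
    have h6 : M' * normO Ωᶜ u < M' * δ := by
      exact mul_lt_mul_of_pos_left hntail hM'pos
    have h7 : (M' + 1) * δ = ε / 2 := by
      rw [hδdef]
      field_simp
    nlinarith [hmvt]
  -- put the pieces together
  have hsplit : K (u + w n) - K u - K (w n)
      = (KO Ω (u + w n) - KO Ω u - KO Ω (w n))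
        + (KO Ωᶜ (u + w n) - KO Ωᶜ u - KO Ωᶜ (w n)) := by
    rw [hKuniv, hKuniv, hKuniv, hKsplit Ω (u + w n), hKsplit Ω u, hKsplit Ω (w n)]
    ring
  rw [Real.norm_eq_abs, hsplit]
  calc |(KO Ω (u + w n) - KO Ω u - KO Ω (w n))
        + (KO Ωᶜ (u + w n) - KO Ωᶜ u - KO Ωᶜ (w n))|
      ≤ |KO Ω (u + w n) - KO Ω u - KO Ω (w n)|
        + |KO Ωᶜ (u + w n) - KO Ωᶜ u - KO Ωᶜ (w n)| := abs_add_le _ _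
    _ < ε / 2 + ε / 2 := by
        have := hn
        rw [Real.norm_eq_abs] at this
        exact add_lt_add this habs
    _ = ε := by ring
end

section
/- Suppose E : X → ℝ satisfies: ‖uₙ‖ → ∞ implies E(uₙ) → ∞ (coercivity), and |C(uₙ)| → ∞ implies ‖uₙ‖ → ∞ along a subsequence (from boundedness assumption E−4/E−2). Then σ·Λ_σ → ∞ as σ → ∞, where Λ_σ is the constrained infimum of E(u)/|C(u)| near |C(u)| = σ. -/
open Filter

/-- `Λ_σ = lim_{ε→0} inf { E(u)/|C(u)| : σ - ε ≤ |C(u)| ≤ σ + ε }`. -/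
noncomputable def Lam {X : Type*} (E C : X → ℝ) (σ : ℝ) : EReal :=
  ⨆ (ε : ℝ) (_ : 0 < ε),
    sInf {r : EReal | ∃ u : X, σ - ε ≤ |C u| ∧ |C u| ≤ σ + ε ∧ 0 < |C u| ∧
      r = ((E u / |C u| : ℝ) : EReal)}

/-- Remark `figo`: hypothesis (ei) implies (beg): if `E` is coercive
(`‖uₙ‖ → ∞ ⟹ E(uₙ) → ∞`) and `|C(uₙ)| → ∞` forces `‖uₙ‖ → ∞` along a
subsequence, then `σ·Λ_σ → ∞` as `σ → ∞`. -/
theorem stmt9 {X : Type*} [NormedAddCommGroup X] (E C : X → ℝ)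
    (hEnn : ∀ u, 0 ≤ E u)
    (hcoer : ∀ u : ℕ → X,
      Tendsto (fun n => ‖u n‖) atTop atTop → Tendsto (fun n => E (u n)) atTop atTop)
    (hCn : ∀ u : ℕ → X, Tendsto (fun n => |C (u n)|) atTop atTop →
      ∃ φ : ℕ → ℕ, StrictMono φ ∧ Tendsto (fun n => ‖u (φ n)‖) atTop atTop) :
    Tendsto (fun σ : ℝ => (σ : EReal) * Lam E C σ) atTop (nhds ⊤) := by
  -- key: energies blow up as |C u| → ∞
  have key : ∀ M : ℝ, ∃ R : ℝ, ∀ u : X, R ≤ |C u| → M ≤ E u := by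
    intro M
    by_contra h
    push_neg at h
    choose u hu1 hu2 using fun n : ℕ => h n
    have hC : Tendsto (fun n => |C (u n)|) atTop atTop :=
      tendsto_atTop_mono (fun n => hu1 n) tendsto_natCast_atTop_atTop
    obtain ⟨φ, hφ, hnorm⟩ := hCn u hC
    have hE : Tendsto (fun n => E (u (φ n))) atTop atTop := hcoer _ hnorm
    obtain ⟨n, hn⟩ := (hE.eventually_ge_atTop M).exists
    exact absurd hn (not_le.2 (hu2 (φ n)))
  rw [EReal.tendsto_nhds_top_iff_real]
  intro x
  set M : ℝ := 2 * |x| + 2 with hM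
  have hMpos : 0 < M := by positivity
  obtain ⟨R, hR⟩ := key M
  filter_upwards [eventually_ge_atTop (max (R + 1) 1)] with σ hσ
  have hσ1 : (1 : ℝ) ≤ σ := le_trans (le_max_right _ _) hσ
  have hσR : R + 1 ≤ σ := le_trans (le_max_left _ _) hσ
  have hσpos : (0 : ℝ) < σ := lt_of_lt_of_le one_pos hσ1
  -- lower bound for the infimum at ε = 1
  have hinf : ((M / (σ + 1) : ℝ) : EReal) ≤
      sInf {r : EReal | ∃ u : X, σ - 1 ≤ |C u| ∧ |C u| ≤ σ + 1 ∧ 0 < |C u| ∧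
        r = ((E u / |C u| : ℝ) : EReal)} := by
    apply le_sInf
    rintro r ⟨u, h1, h2, h3, rfl⟩
    have hRu : R ≤ |C u| := by linarith
    have hEu : M ≤ E u := hR u hRu
    have : M / (σ + 1) ≤ E u / |C u| := by
      apply div_le_div₀ (hEnn u) hEu h3 h2
    exact_mod_cast this
  have hLam : ((M / (σ + 1) : ℝ) : EReal) ≤ Lam E C σ :=
    le_trans hinf (le_iSup₂ (f := fun (ε : ℝ) (_ : 0 < ε) =>
      sInf {r : EReal | ∃ u : X, σ - ε ≤ |C u| ∧ |C u| ≤ σ + ε ∧ 0 < |C u| ∧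
        r = ((E u / |C u| : ℝ) : EReal)}) (1 : ℝ) one_pos)
  have hmul : ((σ * (M / (σ + 1)) : ℝ) : EReal) ≤ (σ : EReal) * Lam E C σ := by
    rw [EReal.coe_mul]
    exact mul_le_mul_of_nonneg_left hLam (by exact_mod_cast hσpos.le)
  refine lt_of_lt_of_le ?_ hmul
  rw [EReal.coe_lt_coe_iff]
  have h1 : M / 2 ≤ σ * (M / (σ + 1)) := by
    rw [mul_div_assoc', div_le_div_iff₀ (by norm_num) (by linarith)]
    nlinarith
  have h2 : x < M / 2 := by
    have := abs_nonneg x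
    have := le_abs_self x
    simp only [hM]; linarith
  linarith
end

section
/- (Lower bound for e₀ for NKG.) Let h : ℝ^N → ℝ measurable with h(x) ≥ h₀ > 0, and Q ⊂ ℝ^N measurable. For every pair (ψ, ψ̂) ∈ H¹(Q, ℂ) × L²(Q, ℂ) with Re ∫_Q i ψ̂ ψ̄ dx ≠ 0: (½∫_Q(|ψ̂|² + |∇ψ|² + h(x)²|ψ|²) dx) / |Re ∫_Q i ψ̂ ψ̄ dx| ≥ h₀. In particular e₀ ≥ h₀. -/
open MeasureTheory

/-- first half of Lemma `ve`, lower bound for `e₀` for NKG: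
if `h(x) ≥ h₀ > 0`, then for every pair `(ψ, ψ̂)` (with the relevant localized
integrability on `Q`) whose localized hylenic charge `Re ∫_Q i ψ̂ ψ̄` is nonzero,
`(½ ∫_Q (|ψ̂|² + |∇ψ|² + h(x)²|ψ|²)) / |Re ∫_Q i ψ̂ ψ̄| ≥ h₀`. -/
theorem stmt13 (N : ℕ) (Q : Set (EuclideanSpace ℝ (Fin N))) (hQ : MeasurableSet Q)
    (h : EuclideanSpace ℝ (Fin N) → ℝ) (h0 : ℝ) (hh0 : 0 < h0) (hh : ∀ x, h0 ≤ h x)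
    (ψ ψh : EuclideanSpace ℝ (Fin N) → ℂ)
    (hψm : AEStronglyMeasurable ψ (volume.restrict Q))
    (hψhm : AEStronglyMeasurable ψh (volume.restrict Q))
    (h1 : IntegrableOn (fun x => ‖ψh x‖ ^ 2) Q)
    (h2 : IntegrableOn (fun x => ‖fderiv ℝ ψ x‖ ^ 2) Q)
    (h3 : IntegrableOn (fun x => (h x) ^ 2 * ‖ψ x‖ ^ 2) Q)
    (hne : (∫ x in Q, (Complex.I * ψh x * (starRingEnd ℂ) (ψ x)).re) ≠ 0) :
    h0 ≤ (1 / 2 * ∫ x in Q, (‖ψh x‖ ^ 2 + ‖fderiv ℝ ψ x‖ ^ 2 + (h x) ^ 2 * ‖ψ x‖ ^ 2))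
          / |∫ x in Q, (Complex.I * ψh x * (starRingEnd ℂ) (ψ x)).re| := by
  -- integrability of ‖ψ‖²
  have hψ2 : IntegrableOn (fun x => ‖ψ x‖ ^ 2) Q := by
    refine Integrable.mono' (h3.const_mul (h0⁻¹ ^ 2)) (hψm.norm.pow 2) ?_
    filter_upwards with x
    have hx : h0 ≤ h x := hh x
    have hpos : (0:ℝ) < h x := lt_of_lt_of_le hh0 hx
    rw [Real.norm_eq_abs, abs_of_nonneg (by positivity)]
    calc ‖ψ x‖ ^ 2 = (h0⁻¹ ^ 2 * h0 ^ 2) * ‖ψ x‖ ^ 2 := by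
          field_simp
      _ ≤ h0⁻¹ ^ 2 * (h x ^ 2 * ‖ψ x‖ ^ 2) := by
          rw [mul_assoc]
          gcongr
  -- integrability of the product
  have hprod : IntegrableOn (fun x => ‖ψh x‖ * ‖ψ x‖) Q := by
    refine Integrable.mono' ((h1.add hψ2).const_mul (1/2)) (hψhm.norm.mul hψm.norm) ?_
    filter_upwards with x
    simp only [Pi.add_apply]
    rw [Real.norm_eq_abs, abs_of_nonneg (by positivity)]
    nlinarith [sq_nonneg (‖ψh x‖ - ‖ψ x‖)]
  -- integrability of Re(i ψ̂ ψ̄)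
  have hrem : AEStronglyMeasurable (fun x => (Complex.I * ψh x * (starRingEnd ℂ) (ψ x)).re)
      (volume.restrict Q) := by
    exact (Complex.continuous_re.comp_aestronglyMeasurable
      (((aestronglyMeasurable_const.mul hψhm).mul
        ((Complex.continuous_conj.comp_aestronglyMeasurable hψm))))).congr (by rfl)
  have hre : IntegrableOn (fun x => (Complex.I * ψh x * (starRingEnd ℂ) (ψ x)).re) Q := by
    refine Integrable.mono' hprod hrem ?_
    filter_upwards with x
    calc ‖(Complex.I * ψh x * (starRingEnd ℂ) (ψ x)).re‖
        ≤ ‖Complex.I * ψh x * (starRingEnd ℂ) (ψ x)‖ := Complex.abs_re_le_norm _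
      _ = ‖ψh x‖ * ‖ψ x‖ := by
          rw [norm_mul, norm_mul, Complex.norm_I, one_mul, RCLike.norm_conj]
  -- |∫ Re| ≤ ∫ ‖ψ̂‖‖ψ‖
  have step1 : |∫ x in Q, (Complex.I * ψh x * (starRingEnd ℂ) (ψ x)).re|
      ≤ ∫ x in Q, ‖ψh x‖ * ‖ψ x‖ := by
    calc |∫ x in Q, (Complex.I * ψh x * (starRingEnd ℂ) (ψ x)).re|
        ≤ ∫ x in Q, |(Complex.I * ψh x * (starRingEnd ℂ) (ψ x)).re| :=
          by simpa [Real.norm_eq_abs] using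
            norm_integral_le_integral_norm (μ := volume.restrict Q)
              (fun x => (Complex.I * ψh x * (starRingEnd ℂ) (ψ x)).re)
      _ ≤ ∫ x in Q, ‖ψh x‖ * ‖ψ x‖ := by
          refine integral_mono hre.abs hprod fun x => ?_
          calc |(Complex.I * ψh x * (starRingEnd ℂ) (ψ x)).re|
              ≤ ‖Complex.I * ψh x * (starRingEnd ℂ) (ψ x)‖ := Complex.abs_re_le_norm _
            _ = ‖ψh x‖ * ‖ψ x‖ := by
                rw [norm_mul, norm_mul, Complex.norm_I, one_mul, RCLike.norm_conj]
  -- AM-GM step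
  have step2 : h0 * ∫ x in Q, ‖ψh x‖ * ‖ψ x‖
      ≤ 1 / 2 * ∫ x in Q, (‖ψh x‖ ^ 2 + ‖fderiv ℝ ψ x‖ ^ 2 + (h x) ^ 2 * ‖ψ x‖ ^ 2) := by
    rw [← integral_const_mul, ← integral_const_mul]
    refine integral_mono (hprod.const_mul _) (((h1.add h2).add h3).const_mul _) fun x => ?_
    have hx : h0 ≤ h x := hh x
    have h2x : h0 ^ 2 * ‖ψ x‖ ^ 2 ≤ h x ^ 2 * ‖ψ x‖ ^ 2 := by
      gcongr
    nlinarith [sq_nonneg (‖ψh x‖ - h0 * ‖ψ x‖), sq_nonneg (‖fderiv ℝ ψ x‖)]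
  have hB : 0 < |∫ x in Q, (Complex.I * ψh x * (starRingEnd ℂ) (ψ x)).re| :=
    abs_pos.mpr hne
  rw [le_div_iff₀ hB]
  calc h0 * |∫ x in Q, (Complex.I * ψh x * (starRingEnd ℂ) (ψ x)).re|
      ≤ h0 * ∫ x in Q, ‖ψh x‖ * ‖ψ x‖ := by gcongr
    _ ≤ _ := step2
end

section
/- (Upper bound for Λ* for NKG.) Assume W : ℝ^N × ℝ⁺ → ℝ satisfies W ≥ 0 and the hylomorphy condition: there exist α, s̄ > 0 with W(x, s̄) ≤ ½α²s̄² for all x. Then Λ* := inf over (ψ, ψ̂) ∈ H¹ × L² with Re∫iψ̂ψ̄ ≠ 0 of [∫(½|ψ̂|² + ½|∇ψ|² + W(x,ψ)) dx] / |Re∫iψ̂ψ̄ dx| satisfies Λ* ≤ α. -/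
open MeasureTheory Metric
set_option maxHeartbeats 1000000

/-- second half of Lemma `ve`, upper bound for `Λ*` for NKG:
if `W ≥ 0` (jointly measurable and bounded on bounded `s`-sets, as follows from the
NKG growth assumptions) satisfies the hylomorphy condition `W(x, s̄) ≤ ½α²s̄²` for
some `α, s̄ > 0` and all `x`, then
`Λ* = inf { [∫ ½|ψ̂|² + ½|∇ψ|² + W(x,|ψ|)] / |Re ∫ i ψ̂ ψ̄| } ≤ α`. -/
theorem stmt14 (N : ℕ) (hN : 1 ≤ N)
    (W : EuclideanSpace ℝ (Fin N) → ℝ → ℝ)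
    (hWmeas : Measurable (Function.uncurry W))
    (hWnn : ∀ x s, 0 ≤ s → 0 ≤ W x s)
    (α sbar : ℝ) (hα : 0 < α) (hsbar : 0 < sbar)
    (hhyl : ∀ x, W x sbar ≤ 1 / 2 * α ^ 2 * sbar ^ 2)
    (hWbd : ∃ Cb : ℝ, ∀ x s, 0 ≤ s → s ≤ sbar → W x s ≤ Cb) :
    sInf {r : ℝ | ∃ ψ ψh : EuclideanSpace ℝ (Fin N) → ℂ,
      Integrable (fun x =>
        1 / 2 * ‖ψh x‖ ^ 2 + 1 / 2 * ‖fderiv ℝ ψ x‖ ^ 2 + W x ‖ψ x‖) ∧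
      Integrable (fun x => (Complex.I * ψh x * (starRingEnd ℂ) (ψ x)).re) ∧
      (∫ x, (Complex.I * ψh x * (starRingEnd ℂ) (ψ x)).re) ≠ 0 ∧
      r = (∫ x, (1 / 2 * ‖ψh x‖ ^ 2 + 1 / 2 * ‖fderiv ℝ ψ x‖ ^ 2 + W x ‖ψ x‖)) /
            |∫ x, (Complex.I * ψh x * (starRingEnd ℂ) (ψ x)).re|}
      ≤ α := by
  classical
  haveI ntr : Nontrivial (EuclideanSpace ℝ (Fin N)) :=
    nontrivial_of_ne (EuclideanSpace.single ⟨0, hN⟩ (1:ℝ)) 0 (by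
      intro h
      have := congrArg (fun v : EuclideanSpace ℝ (Fin N) => v ⟨0, hN⟩) h
      simp [EuclideanSpace.single] at this)
  set S : Set ℝ := {r : ℝ | ∃ ψ ψh : EuclideanSpace ℝ (Fin N) → ℂ,
      Integrable (fun x =>
        1 / 2 * ‖ψh x‖ ^ 2 + 1 / 2 * ‖fderiv ℝ ψ x‖ ^ 2 + W x ‖ψ x‖) ∧
      Integrable (fun x => (Complex.I * ψh x * (starRingEnd ℂ) (ψ x)).re) ∧
      (∫ x, (Complex.I * ψh x * (starRingEnd ℂ) (ψ x)).re) ≠ 0 ∧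
      r = (∫ x, (1 / 2 * ‖ψh x‖ ^ 2 + 1 / 2 * ‖fderiv ℝ ψ x‖ ^ 2 + W x ‖ψ x‖)) /
            |∫ x, (Complex.I * ψh x * (starRingEnd ℂ) (ψ x)).re|} with hS
  have hbdd : BddBelow S := by
    refine ⟨0, fun r hr => ?_⟩
    obtain ⟨ψ, ψh, hEint, hCint, hCne, hr⟩ := hr
    have hE : 0 ≤ ∫ x, (1 / 2 * ‖ψh x‖ ^ 2 + 1 / 2 * ‖fderiv ℝ ψ x‖ ^ 2 + W x ‖ψ x‖) :=
      integral_nonneg fun x =>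
        add_nonneg (add_nonneg (by positivity) (by positivity)) (hWnn _ _ (norm_nonneg _))
    rw [hr]
    exact div_nonneg hE (abs_nonneg _)
  rcases Set.eq_empty_or_nonempty S with hemp | ⟨r₀, hr₀⟩
  · rw [hemp, Real.sInf_empty]; exact hα.le
  obtain ⟨ψ₀, ψh₀, hE₀int, hC₀int, hC₀ne, -⟩ := hr₀
  set e₀ : EuclideanSpace ℝ (Fin N) → ℝ :=
    fun x => 1 / 2 * ‖ψh₀ x‖ ^ 2 + 1 / 2 * ‖fderiv ℝ ψ₀ x‖ ^ 2 + W x ‖ψ₀ x‖ with he₀def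
  set c₀ : EuclideanSpace ℝ (Fin N) → ℝ :=
    fun x => (Complex.I * ψh₀ x * (starRingEnd ℂ) (ψ₀ x)).re with hc₀def
  have he₀nn : ∀ x, 0 ≤ e₀ x := fun x =>
    add_nonneg (add_nonneg (by positivity) (by positivity)) (hWnn _ _ (norm_nonneg _))
  set E₀ : ℝ := ∫ x, e₀ x with hE₀def
  have hE₀ : 0 ≤ E₀ := integral_nonneg he₀nn
  have hMint : Integrable (fun x => |c₀ x|) := hC₀int.abs
  set M : ℝ := ∫ x, |c₀ x| with hMdef
  have hM : 0 ≤ M := integral_nonneg fun x => abs_nonneg _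
  refine le_of_forall_pos_le_add fun ε hε => ?_
  -- choose radius R
  set c1 : ℝ := (volume (ball (0 : EuclideanSpace ℝ (Fin N)) 1)).toReal with hc1def
  have hc1pos : 0 < c1 :=
    ENNReal.toReal_pos (measure_ball_pos _ _ one_pos).ne' measure_ball_lt_top.ne
  set V : ℝ := max (M / (α * sbar ^ 2) + 1) ((E₀ + (α + ε) * M + 1) / (ε * α * sbar ^ 2)) with hVdef
  set R : ℝ := max 1 (V / c1) with hRdef
  have hR1 : (1:ℝ) ≤ R := le_max_left _ _
  have hRpos : (0:ℝ) < R := lt_of_lt_of_le one_pos hR1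
  set v : ℝ := (volume (ball (0 : EuclideanSpace ℝ (Fin N)) R)).toReal with hvdef
  have hvlt : volume (ball (0 : EuclideanSpace ℝ (Fin N)) R) < ⊤ := measure_ball_lt_top
  have hvval : v = R ^ N * c1 := by
    rw [hvdef, Measure.addHaar_ball _ _ hRpos.le, finrank_euclideanSpace_fin,
      ENNReal.toReal_mul, ENNReal.toReal_ofReal (by positivity)]
  have hvge : V ≤ v := by
    have h1 : V / c1 ≤ R := le_max_right _ _
    have h2 : R ≤ R ^ N := le_self_pow₀ hR1 (by omega)
    have h3 : V ≤ R * c1 := by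
      rw [div_le_iff₀ hc1pos] at h1; exact h1
    calc V ≤ R * c1 := h3
      _ ≤ R ^ N * c1 := mul_le_mul_of_nonneg_right h2 hc1pos.le
      _ = v := hvval.symm
  have hαs : (0:ℝ) < α * sbar ^ 2 := by positivity
  have key1 : M + α * sbar ^ 2 ≤ α * sbar ^ 2 * v := by
    have hv1 : M / (α * sbar ^ 2) + 1 ≤ v := le_trans (le_max_left _ _) hvge
    have h := mul_le_mul_of_nonneg_left hv1 hαs.le
    have heq : α * sbar ^ 2 * (M / (α * sbar ^ 2) + 1) = M + α * sbar ^ 2 := by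
      field_simp
    linarith
  have key2 : E₀ + (α + ε) * M + 1 ≤ ε * α * sbar ^ 2 * v := by
    have hεαs : (0:ℝ) < ε * α * sbar ^ 2 := by positivity
    have hv2 : (E₀ + (α + ε) * M + 1) / (ε * α * sbar ^ 2) ≤ v := le_trans (le_max_right _ _) hvge
    have h := mul_le_mul_of_nonneg_left hv2 hεαs.le
    have heq : ε * α * sbar ^ 2 * ((E₀ + (α + ε) * M + 1) / (ε * α * sbar ^ 2))
        = E₀ + (α + ε) * M + 1 := by field_simp
    linarith
  -- test functions
  set ψ : EuclideanSpace ℝ (Fin N) → ℂ :=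
    fun x => if ‖x‖ < R then ((sbar : ℝ) : ℂ) else ψ₀ x with hψdef
  set ψh : EuclideanSpace ℝ (Fin N) → ℂ :=
    fun x => if ‖x‖ < R then -(Complex.I * (((α * sbar : ℝ)) : ℂ)) else ψh₀ x with hψhdef
  -- charge function
  have hcfun : (fun x => (Complex.I * ψh x * (starRingEnd ℂ) (ψ x)).re)
      = fun x => Set.indicator (ball (0 : EuclideanSpace ℝ (Fin N)) R) (fun _ => α * sbar ^ 2) x
        + Set.indicator (ball (0 : EuclideanSpace ℝ (Fin N)) R)ᶜ c₀ x := by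
    funext x
    by_cases hx : ‖x‖ < R
    · have hxm : x ∈ ball (0 : EuclideanSpace ℝ (Fin N)) R := mem_ball_zero_iff.mpr hx
      rw [Set.indicator_of_mem hxm, Set.indicator_of_notMem (by simpa using hxm)]
      simp only [hψdef, hψhdef, if_pos hx]
      simp [Complex.mul_re, Complex.mul_im, Complex.conj_ofReal]
      ring
    · have hxm : x ∉ ball (0 : EuclideanSpace ℝ (Fin N)) R := by
        simpa [mem_ball_zero_iff] using hx
      rw [Set.indicator_of_notMem hxm, Set.indicator_of_mem (Set.mem_compl hxm)]
      simp only [hψdef, hψhdef, if_neg hx, hc₀def, zero_add]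
  have hCballint : Integrable
      (Set.indicator (ball (0 : EuclideanSpace ℝ (Fin N)) R) (fun _ => α * sbar ^ 2)) :=
    (integrableOn_const hvlt.ne).integrable_indicator measurableSet_ball
  have hCoutint : Integrable (Set.indicator (ball (0 : EuclideanSpace ℝ (Fin N)) R)ᶜ c₀) :=
    hC₀int.integrableOn.integrable_indicator measurableSet_ball.compl
  have hCint : Integrable (fun x => (Complex.I * ψh x * (starRingEnd ℂ) (ψ x)).re) := by
    rw [hcfun]; exact hCballint.add hCoutint
  have hCval : (∫ x, (Complex.I * ψh x * (starRingEnd ℂ) (ψ x)).re)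
      = α * sbar ^ 2 * v + ∫ x in (ball (0 : EuclideanSpace ℝ (Fin N)) R)ᶜ, c₀ x := by
    rw [hcfun, integral_add hCballint hCoutint, integral_indicator measurableSet_ball,
      integral_indicator measurableSet_ball.compl, setIntegral_const]
    rw [smul_eq_mul, mul_comm]
    rfl
  have htail : |∫ x in (ball (0 : EuclideanSpace ℝ (Fin N)) R)ᶜ, c₀ x| ≤ M := by
    calc |∫ x in (ball (0 : EuclideanSpace ℝ (Fin N)) R)ᶜ, c₀ x|
        ≤ ∫ x in (ball (0 : EuclideanSpace ℝ (Fin N)) R)ᶜ, |c₀ x| := by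
          simpa [Real.norm_eq_abs] using
            norm_integral_le_integral_norm (μ := volume.restrict (ball (0 : EuclideanSpace ℝ (Fin N)) R)ᶜ) c₀
      _ ≤ M := setIntegral_le_integral hMint (Filter.Eventually.of_forall fun x => abs_nonneg _)
  have hClb : α * sbar ^ 2 * v - M ≤ |∫ x, (Complex.I * ψh x * (starRingEnd ℂ) (ψ x)).re| := by
    rw [hCval]
    set t : ℝ := ∫ x in (ball (0 : EuclideanSpace ℝ (Fin N)) R)ᶜ, c₀ x
    have h1 : |α * sbar ^ 2 * v| ≤ |α * sbar ^ 2 * v + t| + |t| := by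
      calc |α * sbar ^ 2 * v| = |(α * sbar ^ 2 * v + t) + -t| := by congr 1; ring
        _ ≤ |α * sbar ^ 2 * v + t| + |-t| := abs_add_le _ _
        _ = |α * sbar ^ 2 * v + t| + |t| := by rw [abs_neg]
    have h2 : α * sbar ^ 2 * v ≤ |α * sbar ^ 2 * v| := le_abs_self _
    linarith
  have hCpos : 0 < |∫ x, (Complex.I * ψh x * (starRingEnd ℂ) (ψ x)).re| :=
    lt_of_lt_of_le (by linarith) hClb
  have hCne : (∫ x, (Complex.I * ψh x * (starRingEnd ℂ) (ψ x)).re) ≠ 0 := by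
    intro h
    rw [h, abs_zero] at hCpos
    exact lt_irrefl _ hCpos
  -- energy
  have hWsbar_meas : Measurable fun x : EuclideanSpace ℝ (Fin N) => W x sbar :=
    hWmeas.comp (measurable_id.prodMk measurable_const)
  have hp1 : IntegrableOn (fun y => 1 / 2 * (α * sbar) ^ 2 + W y sbar)
      (ball (0 : EuclideanSpace ℝ (Fin N)) R) := by
    refine Integrable.mono' (g := fun _ => 1 / 2 * (α * sbar) ^ 2 + 1 / 2 * α ^ 2 * sbar ^ 2)
      (integrableOn_const hvlt.ne)
      (measurable_const.add hWsbar_meas).aestronglyMeasurable ?_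
    refine Filter.Eventually.of_forall fun x => ?_
    have h1 := hWnn x sbar hsbar.le
    have h2 := hhyl x
    rw [Real.norm_eq_abs, abs_of_nonneg (by positivity)]
    linarith
  have hg1int : Integrable (Set.indicator (ball (0 : EuclideanSpace ℝ (Fin N)) R)
      (fun y => 1 / 2 * (α * sbar) ^ 2 + W y sbar)) :=
    hp1.integrable_indicator measurableSet_ball
  have hg2int : Integrable (Set.indicator (closedBall (0 : EuclideanSpace ℝ (Fin N)) R)ᶜ e₀) :=
    hE₀int.integrableOn.integrable_indicator measurableSet_closedBall.compl
  set g : EuclideanSpace ℝ (Fin N) → ℝ := fun x =>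
    Set.indicator (ball (0 : EuclideanSpace ℝ (Fin N)) R) (fun y => 1 / 2 * (α * sbar) ^ 2 + W y sbar) x
    + Set.indicator (closedBall (0 : EuclideanSpace ℝ (Fin N)) R)ᶜ e₀ x with hgdef
  have hgint : Integrable g := hg1int.add hg2int
  have hee : ∀ x : EuclideanSpace ℝ (Fin N), ‖x‖ ≠ R →
      (1 / 2 * ‖ψh x‖ ^ 2 + 1 / 2 * ‖fderiv ℝ ψ x‖ ^ 2 + W x ‖ψ x‖) = g x := by
    intro x hx
    rcases lt_or_gt_of_ne hx with h | h
    · have hxm : x ∈ ball (0 : EuclideanSpace ℝ (Fin N)) R := mem_ball_zero_iff.mpr h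
      have hfd : fderiv ℝ ψ x = 0 := by
        have hev : ψ =ᶠ[nhds x] fun _ => ((sbar : ℝ) : ℂ) := by
          filter_upwards [isOpen_ball.mem_nhds hxm] with y hy
          simp only [hψdef, if_pos (mem_ball_zero_iff.mp hy)]
        rw [hev.fderiv_eq, fderiv_const_apply]
      have hxnc : x ∉ (closedBall (0 : EuclideanSpace ℝ (Fin N)) R)ᶜ := by
        simp only [Set.mem_compl_iff, mem_closedBall_zero_iff, not_le, not_lt]
        exact h.le
      rw [hgdef]
      simp only []
      rw [Set.indicator_of_mem hxm, Set.indicator_of_notMem hxnc, add_zero]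
      have h1 : ‖ψh x‖ = α * sbar := by
        simp only [hψhdef, if_pos h]
        rw [norm_neg, norm_mul, Complex.norm_I, Complex.norm_real, Real.norm_eq_abs,
          abs_of_nonneg (by positivity), one_mul]
      have h2 : ‖ψ x‖ = sbar := by
        simp only [hψdef, if_pos h]
        rw [Complex.norm_real, Real.norm_eq_abs, abs_of_pos hsbar]
      rw [h1, h2, hfd]
      simp
    · have hxm : x ∉ ball (0 : EuclideanSpace ℝ (Fin N)) R := by
        simp only [mem_ball_zero_iff, not_lt]
        exact h.le
      have hxc : x ∈ (closedBall (0 : EuclideanSpace ℝ (Fin N)) R)ᶜ := by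
        simp only [Set.mem_compl_iff, mem_closedBall_zero_iff, not_le]
        exact h
      have hfd : fderiv ℝ ψ x = fderiv ℝ ψ₀ x := by
        have ho : IsOpen {y : EuclideanSpace ℝ (Fin N) | R < ‖y‖} :=
          isOpen_lt continuous_const continuous_norm
        have hev : ψ =ᶠ[nhds x] ψ₀ := by
          filter_upwards [ho.mem_nhds h] with y hy
          simp only [hψdef, if_neg (not_lt_of_gt hy)]
        exact hev.fderiv_eq
      have hψx : ψ x = ψ₀ x := by simp only [hψdef, if_neg (not_lt_of_gt h)]
      have hψhx : ψh x = ψh₀ x := by simp only [hψhdef, if_neg (not_lt_of_gt h)]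
      rw [hgdef]
      simp only []
      rw [Set.indicator_of_notMem hxm, Set.indicator_of_mem hxc, zero_add, hψx, hψhx, hfd, he₀def]
  have hsph : volume (sphere (0 : EuclideanSpace ℝ (Fin N)) R) = 0 :=
    Measure.addHaar_sphere _ _ _
  have heg : (fun x => 1 / 2 * ‖ψh x‖ ^ 2 + 1 / 2 * ‖fderiv ℝ ψ x‖ ^ 2 + W x ‖ψ x‖)
      =ᵐ[volume] g := by
    refine Filter.eventuallyEq_of_mem (s := (sphere (0 : EuclideanSpace ℝ (Fin N)) R)ᶜ) ?_ ?_
    · rw [mem_ae_iff, compl_compl]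
      exact hsph
    · intro x hx
      exact hee x (by simpa [mem_sphere_zero_iff_norm] using hx)
  have hEint : Integrable
      (fun x => 1 / 2 * ‖ψh x‖ ^ 2 + 1 / 2 * ‖fderiv ℝ ψ x‖ ^ 2 + W x ‖ψ x‖) :=
    hgint.congr heg.symm
  have hEval : (∫ x, (1 / 2 * ‖ψh x‖ ^ 2 + 1 / 2 * ‖fderiv ℝ ψ x‖ ^ 2 + W x ‖ψ x‖))
      = ∫ x, g x := integral_congr_ae heg
  have hgbound : (∫ x, g x) ≤ α ^ 2 * sbar ^ 2 * v + E₀ := by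
    rw [hgdef]
    rw [integral_add hg1int hg2int, integral_indicator measurableSet_ball,
      integral_indicator measurableSet_closedBall.compl]
    have hb1 : (∫ x in ball (0 : EuclideanSpace ℝ (Fin N)) R, (1 / 2 * (α * sbar) ^ 2 + W x sbar))
        ≤ ∫ _x in ball (0 : EuclideanSpace ℝ (Fin N)) R, (α ^ 2 * sbar ^ 2 : ℝ) := by
      refine setIntegral_mono_on hp1 (integrableOn_const hvlt.ne) measurableSet_ball
        fun x _ => ?_
      have := hhyl x
      nlinarith [sq_nonneg (α*sbar)]
    have hb2 : (∫ x in (closedBall (0 : EuclideanSpace ℝ (Fin N)) R)ᶜ, e₀ x) ≤ E₀ :=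
      setIntegral_le_integral hE₀int (Filter.Eventually.of_forall he₀nn)
    have hc : (∫ _x in ball (0 : EuclideanSpace ℝ (Fin N)) R, (α ^ 2 * sbar ^ 2 : ℝ))
        = α ^ 2 * sbar ^ 2 * v := by
      rw [setIntegral_const, smul_eq_mul, mul_comm]
      rfl
    linarith
  have hmem : (∫ x, (1 / 2 * ‖ψh x‖ ^ 2 + 1 / 2 * ‖fderiv ℝ ψ x‖ ^ 2 + W x ‖ψ x‖)) /
      |∫ x, (Complex.I * ψh x * (starRingEnd ℂ) (ψ x)).re| ∈ S :=
    ⟨ψ, ψh, hEint, hCint, hCne, rfl⟩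
  have hle : (∫ x, (1 / 2 * ‖ψh x‖ ^ 2 + 1 / 2 * ‖fderiv ℝ ψ x‖ ^ 2 + W x ‖ψ x‖)) /
      |∫ x, (Complex.I * ψh x * (starRingEnd ℂ) (ψ x)).re| ≤ α + ε := by
    rw [div_le_iff₀ hCpos]
    have hαε : (0:ℝ) < α + ε := by linarith
    calc (∫ x, (1 / 2 * ‖ψh x‖ ^ 2 + 1 / 2 * ‖fderiv ℝ ψ x‖ ^ 2 + W x ‖ψ x‖))
        ≤ α ^ 2 * sbar ^ 2 * v + E₀ := by rw [hEval]; exact hgbound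
      _ ≤ (α + ε) * (α * sbar ^ 2 * v - M) := by nlinarith [key2]
      _ ≤ (α + ε) * |∫ x, (Complex.I * ψh x * (starRingEnd ℂ) (ψ x)).re| :=
          mul_le_mul_of_nonneg_left hClb hαε.le
  exact le_trans (csInf_le hbdd hmem) hle
end
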